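/- Let K be a convex body in ℝ^n, let h ≥ 0, and let C = ⋃_{i=1}^m [a_i, b_i] be a connected union of finitely many closed straight-line segments in ℝ^n. Suppose there are nonnegative reals δ_1, …, δ_m with a_i − b_i ∈ δ_i • (K + (−K)) for every i and δ_1 + ⋯ + δ_m ≤ h. Then there exists a translation vector t ∈ ℝ^n such that C ⊆ t + h • K. -/

import Mathlib

open scoped Pointwise

private lemma mem_translate_smul {n : ℕ} {K : Set (Fin n → ℝ)} {t y : Fin n → ℝ} {d : ℝ} :
    y ∈ ({t} : Set (Fin n → ℝ)) + d • K ↔ ∃ w ∈ d • K, y = t + w := by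
  simp only [Set.mem_add, Set.mem_singleton_iff]
  constructor
  · rintro ⟨x, rfl, w, hw, rfl⟩
    exact ⟨w, hw, rfl⟩
  · rintro ⟨w, hw, rfl⟩
    exact ⟨t, rfl, w, hw, rfl⟩

private lemma comb_mem {n : ℕ} {K : Set (Fin n → ℝ)} (hKconv : Convex ℝ K)
    {d1 d2 : ℝ} (h1 : 0 ≤ d1) (h2 : 0 ≤ d2) {u v : Fin n → ℝ}
    (hu : u ∈ K) (hv : v ∈ K) : d1 • u + d2 • v ∈ (d1 + d2) • K := by
  rcases eq_or_lt_of_le (add_nonneg h1 h2) with hs | hs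
  · have hd1 : d1 = 0 := by linarith
    have hd2 : d2 = 0 := by linarith
    exact Set.mem_smul_set.mpr ⟨u, hu, by simp [hd1, hd2]⟩
  · refine Set.mem_smul_set.mpr ⟨(d1 / (d1 + d2)) • u + (d2 / (d1 + d2)) • v,
      hKconv hu hv (div_nonneg h1 hs.le) (div_nonneg h2 hs.le) (by field_simp), ?_⟩
    rw [smul_add, smul_smul, smul_smul, mul_div_cancel₀ _ hs.ne', mul_div_cancel₀ _ hs.ne']

private lemma merge_subset {n : ℕ} {K : Set (Fin n → ℝ)} (hKconv : Convex ℝ K)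
    {d1 d2 : ℝ} (h1 : 0 ≤ d1) (h2 : 0 ≤ d2) {t1 t2 z : Fin n → ℝ}
    (hz1 : z ∈ ({t1} : Set (Fin n → ℝ)) + d1 • K)
    (hz2 : z ∈ ({t2} : Set (Fin n → ℝ)) + d2 • K) :
    (({t1} : Set (Fin n → ℝ)) + d1 • K) ∪ (({t2} : Set (Fin n → ℝ)) + d2 • K) ⊆
      ({t1 + t2 - z} : Set (Fin n → ℝ)) + (d1 + d2) • K := by
  obtain ⟨w1, ⟨k1, hk1, rfl⟩, hz1e⟩ := mem_translate_smul.mp hz1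
  obtain ⟨w2, ⟨k2, hk2, rfl⟩, hz2e⟩ := mem_translate_smul.mp hz2
  intro y hy
  rcases hy with hy | hy
  · obtain ⟨w, ⟨u, hu, rfl⟩, rfl⟩ :=
      (mem_translate_smul (K := K)).mp hy
    refine mem_translate_smul.mpr ⟨d1 • u + d2 • k2, comb_mem hKconv h1 h2 hu hk2, ?_⟩
    rw [hz2e]
    abel
  · obtain ⟨w, ⟨v, hv, rfl⟩, rfl⟩ :=
      (mem_translate_smul (K := K)).mp hy
    refine mem_translate_smul.mpr ⟨d2 • v + d1 • k1, by
      rw [add_comm d1 d2]; exact comb_mem hKconv h2 h1 hv hk1, ?_⟩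
    rw [hz1e]
    abel

/-- A connected union of segments of total length `≤ h` (measured in the norm
with unit ball `K + (−K)`) can be covered by a translate of `h • K`. -/
theorem connected_segments_covered_by_homothet
    {n : ℕ} (K : Set (Fin n → ℝ)) (hK : IsCompact K) (hKconv : Convex ℝ K)
    (hKint : (interior K).Nonempty)
    (h : ℝ) (hh : 0 ≤ h) (m : ℕ) (a b : Fin m → (Fin n → ℝ))
    (hconn : IsConnected (⋃ i, segment ℝ (a i) (b i)))
    (δ : Fin m → ℝ) (hδ : ∀ i, 0 ≤ δ i)
    (hab : ∀ i, a i - b i ∈ δ i • (K + -K))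
    (hsum : ∑ i, δ i ≤ h) :
    ∃ t : Fin n → ℝ, (⋃ i, segment ℝ (a i) (b i)) ⊆ {t} + h • K := by
  classical
  obtain ⟨k0, hk0⟩ : K.Nonempty := hKint.mono interior_subset
  -- decompose the segment directions
  have hchoice : ∀ i, ∃ x ∈ K, ∃ z ∈ K, a i - b i = δ i • x - δ i • z := by
    intro i
    obtain ⟨w, hw, hweq⟩ := Set.mem_smul_set.mp (hab i)
    obtain ⟨x, hx, y, hy, rfl⟩ := hw
    refine ⟨x, hx, -y, by simpa using hy, ?_⟩
    rw [← hweq, smul_add, smul_neg, sub_neg_eq_add]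
  choose x hx z hz hxz using hchoice
  set t : Fin m → (Fin n → ℝ) := fun i => a i - δ i • x i with ht
  set Bs : Fin m → Set (Fin n → ℝ) := fun i => {t i} + δ i • K with hBs
  have haB : ∀ i, a i ∈ Bs i := by
    intro i
    exact mem_translate_smul.mpr ⟨δ i • x i, Set.smul_mem_smul_set (hx i), by simp [ht]⟩
  have hbB : ∀ i, b i ∈ Bs i := by
    intro i
    refine mem_translate_smul.mpr ⟨δ i • z i, Set.smul_mem_smul_set (hz i), ?_⟩
    have hb : b i = a i - (δ i • x i - δ i • z i) := by rw [← hxz i]; abel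
    rw [hb, ht]; beta_reduce; abel
  have hBconv : ∀ i, Convex ℝ (Bs i) := fun i => (convex_singleton _).add (hKconv.smul _)
  have hseg : ∀ i, segment ℝ (a i) (b i) ⊆ Bs i :=
    fun i => (hBconv i).segment_subset (haB i) (hbB i)
  have hBcompact : ∀ i, IsCompact (Bs i) := fun i => isCompact_singleton.add (hK.smul _)
  set X := ⋃ i, segment ℝ (a i) (b i) with hX
  have key : ∀ (k : ℕ) (S : Finset (Fin m)), Sᶜ.card ≤ k → S.Nonempty →
      (∃ t0, (⋃ i ∈ S, Bs i) ⊆ {t0} + (∑ i ∈ S, δ i) • K) →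
      ∃ t0, (⋃ i, Bs i) ⊆ {t0} + (∑ i, δ i) • K := by
    intro k
    induction k with
    | zero =>
      intro S hcard hSne hcov
      have hS : S = Finset.univ := by
        have : Sᶜ = ∅ := Finset.card_eq_zero.mp (le_antisymm hcard (Nat.zero_le _))
        rwa [Finset.compl_eq_empty_iff] at this
      subst hS
      simpa using hcov
    | succ k ih =>
      intro S hcard hSne hcov
      by_cases hSu : S = Finset.univ
      · subst hSu; simpa using hcov
      · obtain ⟨j0, hj0⟩ : ∃ j, j ∉ S := by
          by_contra hcon
          push_neg at hcon
          exact hSu (Finset.eq_univ_iff_forall.mpr hcon)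
        set A := ⋃ i ∈ S, Bs i with hA
        set C := ⋃ i ∈ Sᶜ, Bs i with hC
        have hAclosed : IsClosed A :=
          (S.finite_toSet.isCompact_biUnion (fun i _ => hBcompact i)).isClosed
        have hCclosed : IsClosed C :=
          ((Sᶜ : Finset (Fin m)).finite_toSet.isCompact_biUnion (fun i _ => hBcompact i)).isClosed
        have hXsub : X ⊆ A ∪ C := by
          intro p hp
          obtain ⟨i, hpi⟩ := Set.mem_iUnion.mp hp
          by_cases hiS : i ∈ S
          · exact Or.inl (Set.mem_biUnion hiS (hseg i hpi))
          · exact Or.inr (Set.mem_biUnion (Finset.mem_compl.mpr hiS) (hseg i hpi))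
        obtain ⟨i0, hi0⟩ := hSne
        have hXA : (X ∩ A).Nonempty :=
          ⟨a i0, Set.mem_iUnion.mpr ⟨i0, left_mem_segment ℝ _ _⟩,
            Set.mem_biUnion hi0 (haB i0)⟩
        have hXC : (X ∩ C).Nonempty :=
          ⟨a j0, Set.mem_iUnion.mpr ⟨j0, left_mem_segment ℝ _ _⟩,
            Set.mem_biUnion (Finset.mem_compl.mpr hj0) (haB j0)⟩
        obtain ⟨p, _, hpA, hpC⟩ :=
          (isPreconnected_closed_iff.mp hconn.isPreconnected) A C hAclosed hCclosed hXsub hXA hXC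
        obtain ⟨j, hjc, hpBj⟩ := Set.mem_iUnion₂.mp hpC
        have hjS : j ∉ S := Finset.mem_compl.mp hjc
        obtain ⟨t0, hcov0⟩ := hcov
        have hs0 : (0:ℝ) ≤ ∑ i ∈ S, δ i := Finset.sum_nonneg fun i _ => hδ i
        have hmerge := merge_subset hKconv hs0 (hδ j) (hcov0 hpA) hpBj
        refine ih (insert j S) ?_ ⟨j, Finset.mem_insert_self j S⟩ ?_
        · rw [Finset.compl_insert]
          have h1 : 1 ≤ Sᶜ.card := Finset.card_pos.mpr ⟨j, hjc⟩
          have := Finset.card_erase_of_mem hjc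
          omega
        · refine ⟨t0 + t j - p, ?_⟩
          rw [Finset.sum_insert hjS, Finset.set_biUnion_insert, add_comm (δ j)]
          refine Set.union_subset ?_ ?_
          · exact fun y hy => hmerge (Or.inr hy)
          · exact fun y hy => hmerge (Or.inl (hcov0 hy))
  -- start the induction from a single segment
  obtain ⟨p0, hp0⟩ := hconn.nonempty
  obtain ⟨i0, -⟩ := Set.mem_iUnion.mp hp0
  obtain ⟨t0, hcov⟩ := key ({i0}ᶜ : Finset (Fin m)).card {i0} le_rfl
    ⟨i0, Finset.mem_singleton_self i0⟩
    ⟨t i0, by rw [Finset.set_biUnion_singleton, Finset.sum_singleton]⟩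
  -- enlarge from `∑ δ` to `h`
  set s : ℝ := ∑ i, δ i with hsdef
  have hs : 0 ≤ s := Finset.sum_nonneg fun i _ => hδ i
  refine ⟨t0 - (h - s) • k0, ?_⟩
  intro p hp
  obtain ⟨i, hpi⟩ := Set.mem_iUnion.mp hp
  have hpB : p ∈ ({t0} : Set (Fin n → ℝ)) + s • K :=
    hcov (Set.mem_iUnion.mpr ⟨i, hseg i hpi⟩)
  obtain ⟨w, ⟨u, hu, rfl⟩, rfl⟩ := (mem_translate_smul (K := K)).mp hpB
  refine mem_translate_smul.mpr ⟨s • u + (h - s) • k0, ?_, by abel⟩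
  have := comb_mem hKconv hs (by linarith : (0:ℝ) ≤ h - s) hu hk0
  rwa [add_sub_cancel] at this
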